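/- For all x ≥ 1, F(x) ≤ PR(2x); that is, the number of φ-practical integers up to x is at most the number of practical integers up to 2x. -/

import Mathlib

/-- A positive integer `n` is φ-practical if every integer `m` with `1 ≤ m ≤ n`
is a sum of totients of a subset of the divisors of `n`. -/
def IsPhiPractical (n : ℕ) : Prop :=
  0 < n ∧ ∀ m : ℕ, 1 ≤ m → m ≤ n →
    ∃ D : Finset ℕ, D ⊆ n.divisors ∧ m = ∑ d ∈ D, Nat.totient d

/-- A positive integer `n` is practical if every integer `m` with `1 ≤ m ≤ n`
is a sum of distinct positive divisors of `n`. -/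
def IsPractical (n : ℕ) : Prop :=
  0 < n ∧ ∀ m : ℕ, 1 ≤ m → m ≤ n →
    ∃ D : Finset ℕ, D ⊆ n.divisors ∧ m = ∑ d ∈ D, d

/-- `phiPracticalCount x` is the number of φ-practical integers `n ≤ x`. -/
noncomputable def phiPracticalCount (x : ℝ) : ℕ :=
  Nat.card {n : ℕ | (n : ℝ) ≤ x ∧ IsPhiPractical n}

/-- `practicalCount x` is the number of practical integers `n ≤ x`. -/
noncomputable def practicalCount (x : ℝ) : ℕ :=
  Nat.card {n : ℕ | (n : ℝ) ≤ x ∧ IsPractical n}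

/-- The `p`-smooth part of `n`: the product of all prime powers `q ^ v_q(n)` for primes
`q < p`. -/
def SmoothPart (n p : ℕ) : ℕ :=
  ∏ q ∈ (Finset.range p).filter Nat.Prime, q ^ n.factorization q

lemma smoothPart_pos (n p : ℕ) : 0 < SmoothPart n p :=
  Finset.prod_pos fun q hq => pow_pos (Finset.mem_filter.mp hq).2.pos _

lemma smoothPart_eq {n : ℕ} (hn : n ≠ 0) (p : ℕ) :
    SmoothPart n p = ∏ q ∈ n.primeFactors.filter (· < p), q ^ n.factorization q := by
  refine (Finset.prod_subset ?_ ?_).symm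
  · intro q hq
    rw [Finset.mem_filter] at hq ⊢
    exact ⟨Finset.mem_range.mpr hq.2, Nat.prime_of_mem_primeFactors hq.1⟩
  · intro q hq hq'
    rw [Finset.mem_filter, Finset.mem_range] at hq
    have hnd : ¬ q ∣ n := by
      intro hdvd
      exact hq' (Finset.mem_filter.mpr ⟨Nat.mem_primeFactors.mpr ⟨hq.2, hdvd, hn⟩, hq.1⟩)
    rw [Nat.factorization_eq_zero_of_not_dvd hnd, pow_zero]

lemma smooth_mul_rough {n : ℕ} (hn : n ≠ 0) (p : ℕ) :
    SmoothPart n p *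
      ∏ q ∈ n.primeFactors.filter (fun q => ¬ q < p), q ^ n.factorization q = n := by
  rw [smoothPart_eq hn, Finset.prod_filter_mul_prod_filter_not]
  have := Nat.factorization_prod_pow_eq_self hn
  rwa [Finsupp.prod, Nat.support_factorization] at this

lemma dvd_smoothPart {n d p : ℕ} (hn : n ≠ 0) (hd : d ∣ n)
    (h : ∀ q, q.Prime → q ∣ d → q < p) : d ∣ SmoothPart n p := by
  have hsplit := smooth_mul_rough hn p
  have hcop : d.Coprime
      (∏ q ∈ n.primeFactors.filter (fun q => ¬ q < p), q ^ n.factorization q) := by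
    apply Nat.Coprime.prod_right
    intro q hq
    rw [Finset.mem_filter] at hq
    have hqp : Nat.Prime q := Nat.prime_of_mem_primeFactors hq.1
    apply Nat.Coprime.pow_right
    have hnd : ¬ q ∣ d := fun hdvd => hq.2 (h q hqp hdvd)
    exact ((Nat.Prime.coprime_iff_not_dvd hqp).mpr hnd).symm
  have hd2 : d ∣ SmoothPart n p *
      ∏ q ∈ n.primeFactors.filter (fun q => ¬ q < p), q ^ n.factorization q := by
    rw [hsplit]; exact hd
  exact hcop.dvd_of_dvd_mul_right hd2

/-- If `n` is φ-practical and `p ∣ n` is prime, then `p ≤ SmoothPart n p + 2`. -/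
lemma claimS {n p : ℕ} (hn : IsPhiPractical n) (hp : p.Prime) (hpn : p ∣ n) :
    p ≤ SmoothPart n p + 2 := by
  by_contra hcon
  push_neg at hcon
  obtain ⟨hn0, hrep⟩ := hn
  have hn0' : n ≠ 0 := hn0.ne'
  have hPpos : 0 < SmoothPart n p := smoothPart_pos n p
  have hpn' : p ≤ n := Nat.le_of_dvd hn0 hpn
  obtain ⟨D, hD, hsum⟩ := hrep (SmoothPart n p + 1) (by omega) (by omega)
  have hDP : D ⊆ (SmoothPart n p).divisors := by
    intro d hd
    have hdn := hD hd
    rw [Nat.mem_divisors] at hdn ⊢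
    have hphi : Nat.totient d ≤ SmoothPart n p + 1 :=
      hsum ▸ Finset.single_le_sum (f := Nat.totient) (fun i _ => Nat.zero_le _) hd
    refine ⟨dvd_smoothPart hn0' hdn.1 ?_, hPpos.ne'⟩
    intro q hq hqd
    by_contra hqp
    push_neg at hqp
    have h1 : Nat.totient q ∣ Nat.totient d := Nat.totient_dvd_of_dvd hqd
    have hd0 : 0 < d := Nat.pos_of_ne_zero (by
      intro h0
      rw [h0] at hdn
      exact hdn.2 (zero_dvd_iff.mp hdn.1))
    have h2 : Nat.totient q ≤ Nat.totient d :=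
      Nat.le_of_dvd (Nat.totient_pos.mpr hd0) h1
    rw [Nat.totient_prime hq] at h2
    have := hq.two_le
    omega
  have hle : SmoothPart n p + 1 ≤ SmoothPart n p := by
    calc SmoothPart n p + 1 = ∑ d ∈ D, Nat.totient d := hsum
      _ ≤ ∑ d ∈ (SmoothPart n p).divisors, Nat.totient d :=
          Finset.sum_le_sum_of_subset hDP
      _ = SmoothPart n p := Nat.sum_totient _
  omega

lemma geom_sum_mul_pred {p : ℕ} (hp : 2 ≤ p) (k : ℕ) :
    (p - 1) * ∑ i ∈ Finset.range k, p ^ i = p ^ k - 1 := by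
  induction k with
  | zero => simp
  | succ k ih =>
    rw [Finset.sum_range_succ, Nat.mul_add, ih]
    have h1 : 1 ≤ p ^ k := Nat.one_le_pow _ _ (by omega)
    have h2 : p ^ (k + 1) = p ^ k * p := pow_succ p k
    have h3 : (p - 1) * p ^ k = p * p ^ k - p ^ k := by rw [Nat.sub_mul, one_mul]
    have h4 : p * p ^ k = p ^ k * p := Nat.mul_comm _ _
    have h5 : p ^ k ≤ p ^ k * p := Nat.le_mul_of_pos_right _ (by omega)
    omega

lemma le_sum_divisors {N : ℕ} (hN : N ≠ 0) : N ≤ ∑ d ∈ N.divisors, d :=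
  Finset.single_le_sum (f := fun d => d) (fun i _ => Nat.zero_le i)
    (Nat.mem_divisors_self N hN)

lemma one_add_le_sum_divisors {N : ℕ} (hN : 2 ≤ N) : N + 1 ≤ ∑ d ∈ N.divisors, d := by
  have h1 : ({1, N} : Finset ℕ) ⊆ N.divisors := by
    intro d hd
    rcases Finset.mem_insert.mp hd with h | h
    · exact h ▸ Nat.one_mem_divisors.mpr (by omega)
    · exact (Finset.mem_singleton.mp h) ▸ Nat.mem_divisors_self N (by omega)
  have h2 : ∑ d ∈ ({1, N} : Finset ℕ), d ≤ ∑ d ∈ N.divisors, d :=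
    Finset.sum_le_sum_of_subset h1
  rw [Finset.sum_pair (by omega : (1 : ℕ) ≠ N)] at h2
  omega

lemma cov_mul_prime_pow {M p : ℕ} (hM : 0 < M) (hp : p.Prime) (hpM : ¬ p ∣ M)
    (hple : p ≤ 1 + ∑ d ∈ M.divisors, d)
    (hcov : ∀ x ≤ ∑ d ∈ M.divisors, d, ∃ D ⊆ M.divisors, x = ∑ d ∈ D, d) (a : ℕ) :
    ∀ x ≤ ∑ d ∈ (M * p ^ a).divisors, d, ∃ D ⊆ (M * p ^ a).divisors, x = ∑ d ∈ D, d := by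
  have hcop : ∀ j : ℕ, M.Coprime (p ^ j) := fun j =>
    Nat.Coprime.pow_right j ((Nat.Prime.coprime_iff_not_dvd hp).mpr hpM).symm
  have hS : ∀ j : ℕ, ∑ d ∈ (M * p ^ j).divisors, d
      = (∑ d ∈ M.divisors, d) * ∑ i ∈ Finset.range (j + 1), p ^ i := by
    intro j
    rw [Nat.Coprime.sum_divisors_mul (hcop j), Nat.sum_divisors_prime_pow hp]
  induction a with
  | zero => simpa using hcov
  | succ a ih =>
    intro x hx
    have hppos : 0 < p ^ (a + 1) := pow_pos hp.pos _
    set c := min (x / p ^ (a + 1)) (∑ d ∈ M.divisors, d) with hc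
    have hcx : c * p ^ (a + 1) ≤ x := by
      calc c * p ^ (a + 1) ≤ (x / p ^ (a + 1)) * p ^ (a + 1) :=
            Nat.mul_le_mul_right _ (min_le_left _ _)
        _ ≤ x := Nat.div_mul_le_self x _
    set r := x - c * p ^ (a + 1) with hr
    have hgeom := geom_sum_mul_pred hp.two_le (a + 1)
    have hmul : (p - 1) * ∑ i ∈ Finset.range (a + 1 + 1), p ^ i
        ≤ (∑ d ∈ M.divisors, d) * ∑ i ∈ Finset.range (a + 1 + 1), p ^ i :=
      Nat.mul_le_mul_right _ (by omega)
    have hrle : r ≤ ∑ d ∈ (M * p ^ a).divisors, d := by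
      have hSa := hS a
      have hSa1 := hS (a + 1)
      have hsplit : ∑ i ∈ Finset.range (a + 1 + 1), p ^ i
          = (∑ i ∈ Finset.range (a + 1), p ^ i) + p ^ (a + 1) :=
        Finset.sum_range_succ _ _
      rcases le_or_gt (x / p ^ (a + 1)) (∑ d ∈ M.divisors, d) with h1 | h1
      · have hceq : c = x / p ^ (a + 1) := min_eq_left h1
        have hmod := Nat.div_add_mod x (p ^ (a + 1))
        have hlt : x % p ^ (a + 1) < p ^ (a + 1) := Nat.mod_lt _ hppos
        have hcomm : c * p ^ (a + 1) = p ^ (a + 1) * (x / p ^ (a + 1)) := by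
          rw [hceq, Nat.mul_comm]
        have hr2 : r = x % p ^ (a + 1) := by omega
        have hgeom2 := geom_sum_mul_pred hp.two_le (a + 1)
        have hmul2 : (p - 1) * ∑ i ∈ Finset.range (a + 1), p ^ i
            ≤ (∑ d ∈ M.divisors, d) * ∑ i ∈ Finset.range (a + 1), p ^ i :=
          Nat.mul_le_mul_right _ (by omega)
        have hgeom3 := geom_sum_mul_pred hp.two_le a
        omega
      · have hceq : c = ∑ d ∈ M.divisors, d := min_eq_right (le_of_lt h1)
        rw [hceq] at hcx hr
        have hx' : x ≤ (∑ d ∈ M.divisors, d) * ((∑ i ∈ Finset.range (a + 1), p ^ i)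
            + p ^ (a + 1)) := by rw [← hsplit, ← hSa1]; exact hx
        rw [Nat.mul_add] at hx'
        omega
    obtain ⟨Dr, hDr, hDrsum⟩ := ih r hrle
    obtain ⟨Dc, hDc, hDcsum⟩ := hcov c (min_le_right _ _)
    have hMp0 : M * p ^ (a + 1) ≠ 0 := by positivity
    have hdisj : Disjoint Dr (Dc.image (· * p ^ (a + 1))) := by
      rw [Finset.disjoint_right]
      intro t ht htr
      obtain ⟨d, hdDc, hdt⟩ := Finset.mem_image.mp ht
      have htdvd : t ∣ M * p ^ a := (Nat.mem_divisors.mp (hDr htr)).1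
      have hpt : p ^ (a + 1) ∣ t := hdt ▸ Dvd.intro_left d rfl
      have : p ^ (a + 1) ∣ M * p ^ a := hpt.trans htdvd
      have h2 : p ^ a * p ∣ p ^ a * M := by
        rw [← pow_succ]
        rwa [Nat.mul_comm M (p ^ a)] at this
      have h3 : p ∣ M := (mul_dvd_mul_iff_left (pow_pos hp.pos a).ne').mp h2
      exact hpM h3
    refine ⟨Dr ∪ Dc.image (· * p ^ (a + 1)), ?_, ?_⟩
    · apply Finset.union_subset
      · intro d hd
        have := (Nat.mem_divisors.mp (hDr hd)).1
        exact Nat.mem_divisors.mpr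
          ⟨this.trans (mul_dvd_mul_left M (pow_dvd_pow p (Nat.le_succ a))), hMp0⟩
      · intro t ht
        obtain ⟨d, hdDc, hdt⟩ := Finset.mem_image.mp ht
        have hdM : d ∣ M := (Nat.mem_divisors.mp (hDc hdDc)).1
        exact Nat.mem_divisors.mpr ⟨hdt ▸ mul_dvd_mul hdM dvd_rfl, hMp0⟩
    · rw [Finset.sum_union hdisj,
        Finset.sum_image (fun a _ b _ h => Nat.eq_of_mul_eq_mul_right hppos h)]
      have himg : ∑ d ∈ Dc, d * p ^ (a + 1) = c * p ^ (a + 1) := by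
        rw [← Finset.sum_mul, ← hDcsum]
      omega

theorem cov_of_smooth : ∀ N, 0 < N →
    (∀ p, p.Prime → p ∣ N → p ≤ 1 + ∑ d ∈ (SmoothPart N p).divisors, d) →
    ∀ x ≤ ∑ d ∈ N.divisors, d, ∃ D ⊆ N.divisors, x = ∑ d ∈ D, d := by
  intro N
  induction N using Nat.strong_induction_on with
  | _ N IH =>
    intro hN h
    rcases eq_or_lt_of_le (show 1 ≤ N from hN) with h1 | hN1
    · -- N = 1
      intro x hx
      rw [← h1] at hx ⊢
      simp only [Nat.divisors_one, Finset.sum_singleton] at hx ⊢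
      interval_cases x
      · exact ⟨∅, Finset.empty_subset _, by simp⟩
      · exact ⟨{1}, Finset.Subset.refl _, by simp⟩
    · -- N > 1
      have hN0 : N ≠ 0 := by omega
      have hne : N.primeFactors.Nonempty := Nat.nonempty_primeFactors.mpr hN1
      set p := N.primeFactors.max' hne with hpdef
      have hpmem : p ∈ N.primeFactors := N.primeFactors.max'_mem hne
      have hp : p.Prime := Nat.prime_of_mem_primeFactors hpmem
      have hpN : p ∣ N := Nat.dvd_of_mem_primeFactors hpmem
      set a := N.factorization p with hadef
      set M := SmoothPart N p with hMdef
      have hMpos : 0 < M := smoothPart_pos N p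
      have ha : 0 < a := hp.factorization_pos_of_dvd hN0 hpN
      have hfilter : N.primeFactors.filter (fun q => ¬ q < p) = {p} := by
        ext q
        simp only [Finset.mem_filter, Finset.mem_singleton, not_lt]
        constructor
        · rintro ⟨hq, hpq⟩
          exact le_antisymm (N.primeFactors.le_max' q hq) hpq
        · rintro rfl
          exact ⟨hpmem, le_refl _⟩
      have hNsplit : M * p ^ a = N := by
        have := smooth_mul_rough hN0 p
        rwa [hfilter, Finset.prod_singleton] at this
      have hppow : 1 < p ^ a := by
        calc 1 < p := hp.one_lt
          _ = p ^ 1 := (pow_one p).symm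
          _ ≤ p ^ a := Nat.pow_le_pow_right hp.pos ha
      have hMlt : M < N := by
        rw [← hNsplit]
        nlinarith
      have hfact : ∀ r : ℕ, N.factorization r
          = M.factorization r + (Finsupp.single p a) r := by
        intro r
        conv_lhs => rw [← hNsplit]
        rw [Nat.factorization_mul hMpos.ne' (by positivity), hp.factorization_pow]
        rfl
      have hMp : M.factorization p = 0 := by
        have := hfact p
        rw [Finsupp.single_eq_same] at this
        omega
      have hpM : ¬ p ∣ M := by
        intro hdvd
        have := hp.factorization_pos_of_dvd hMpos.ne' hdvd
        omega
      have hMfact : ∀ r : ℕ, r ≠ p → M.factorization r = N.factorization r := by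
        intro r hr
        have := hfact r
        rw [Finsupp.single_eq_of_ne' (Ne.symm hr)] at this
        omega
      have hMN : M ∣ N := ⟨p ^ a, hNsplit.symm⟩
      -- hypothesis transfers to M
      have hhM : ∀ q, q.Prime → q ∣ M →
          q ≤ 1 + ∑ d ∈ (SmoothPart M q).divisors, d := by
        intro q hq hqM
        have hqN : q ∣ N := hqM.trans hMN
        have hqp : q < p := by
          have hqle : q ≤ p := N.primeFactors.le_max'
            q (Nat.mem_primeFactors.mpr ⟨hq, hqN, hN0⟩)
          have hqne : q ≠ p := by
            intro hqe
            rw [hqe] at hqM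
            exact hpM hqM
          omega
        have heq : SmoothPart M q = SmoothPart N q := by
          apply Finset.prod_congr rfl
          intro r hr
          rw [Finset.mem_filter, Finset.mem_range] at hr
          rw [hMfact r (by omega)]
        rw [heq]
        exact h q hq hqN
      have hcovM := IH M hMlt hMpos hhM
      have hpleM : p ≤ 1 + ∑ d ∈ M.divisors, d := h p hp hpN
      have := cov_mul_prime_pow hMpos hp hpM hpleM hcovM a
      rwa [hNsplit] at this

/-- Key lemma: if `n` is φ-practical then `2 * n` is practical. -/
lemma isPractical_two_mul {n : ℕ} (hn : IsPhiPractical n) : IsPractical (2 * n) := by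
  have hn0 : 0 < n := hn.1
  have hN0 : (0 : ℕ) < 2 * n := by omega
  have hcond : ∀ p, p.Prime → p ∣ 2 * n →
      p ≤ 1 + ∑ d ∈ (SmoothPart (2 * n) p).divisors, d := by
    intro p hp hpN
    rcases eq_or_ne p 2 with rfl | hp2
    · -- p = 2 : smooth part is 1
      have hempty : (Finset.range 2).filter Nat.Prime = ∅ := by decide
      have h1 : SmoothPart (2 * n) 2 = 1 := by
        rw [SmoothPart, hempty, Finset.prod_empty]
      rw [h1]
      simp [Nat.divisors_one]
    · have hpn : p ∣ n := by
        rcases (Nat.Prime.dvd_mul hp).mp hpN with h | h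
        · exact absurd ((Nat.prime_dvd_prime_iff_eq hp Nat.prime_two).mp h) hp2
        · exact h
      have hclaim := claimS ⟨hn0, hn.2⟩ hp hpn
      have hPpos : 0 < SmoothPart n p := smoothPart_pos n p
      have h2p : 2 < p := by
        have := hp.two_le
        omega
      -- SmoothPart (2n) p = 2 * SmoothPart n p
      have hQ : SmoothPart (2 * n) p = 2 * SmoothPart n p := by
        rw [SmoothPart, SmoothPart]
        have hfact2 : (2 * n).factorization = (2 : ℕ).factorization + n.factorization :=
          Nat.factorization_mul (by norm_num) hn0.ne'
        have : ∀ q ∈ (Finset.range p).filter Nat.Prime,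
            q ^ (2 * n).factorization q
              = q ^ (2 : ℕ).factorization q * q ^ n.factorization q := by
          intro q _
          rw [hfact2, Finsupp.add_apply, pow_add]
        rw [Finset.prod_congr rfl this, Finset.prod_mul_distrib]
        congr 1
        -- ∏ q ^ (2).factorization q = 2
        have h2mem : 2 ∈ (Finset.range p).filter Nat.Prime :=
          Finset.mem_filter.mpr ⟨Finset.mem_range.mpr h2p, Nat.prime_two⟩
        have hfact2' : (2 : ℕ).factorization = Finsupp.single 2 1 :=
          Nat.Prime.factorization Nat.prime_two
        rw [Finset.prod_eq_single_of_mem 2 h2mem ?_]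
        · rw [hfact2', Finsupp.single_eq_same, pow_one]
        · intro b _ hb
          rw [hfact2', Finsupp.single_eq_of_ne' (Ne.symm hb), pow_zero]
      have hσ : 2 * SmoothPart n p + 1 ≤ ∑ d ∈ (2 * SmoothPart n p).divisors, d :=
        one_add_le_sum_divisors (by omega)
      rw [hQ]
      omega
  have hcov := cov_of_smooth (2 * n) hN0 hcond
  refine ⟨hN0, fun m h1 hm => ?_⟩
  exact hcov m (hm.trans (le_sum_divisors (by omega)))

theorem phiPracticalCount_le_practicalCount (x : ℝ) (hx : 1 ≤ x) :
    phiPracticalCount x ≤ practicalCount (2 * x) := by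
  rw [phiPracticalCount, practicalCount, Nat.card_coe_set_eq, Nat.card_coe_set_eq]
  have hT : {n : ℕ | (n : ℝ) ≤ 2 * x ∧ IsPractical n}.Finite := by
    apply Set.Finite.subset (Set.finite_Iic ⌊2 * x⌋₊)
    intro n hn
    exact Nat.le_floor hn.1
  refine Set.ncard_le_ncard_of_injOn (fun n => 2 * n) ?_ ?_ hT
  · rintro n ⟨hnx, hnphi⟩
    refine ⟨?_, isPractical_two_mul hnphi⟩
    push_cast
    linarith
  · intro a _ b _ h
    have h' : 2 * a = 2 * b := h
    omega
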